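/- For all r, v : Fin n → ℝ one has s(Q r − Q v, P r − P v) ≥ 0, i.e. ∑_{i} σ i · ((Q r) i − (Q v) i) · ((P r) i − (P v) i) ≥ 0. -/
import Mathlib

lemma clamp_key (a b x y : ℝ) (hab : a ≤ b) :
    ((x - max a (min x b)) - (y - max a (min y b))) * (max a (min x b) - max a (min y b)) ≥ 0 := by
  rcases le_total x b with h1 | h1 <;> rcases le_total y b with h2 | h2 <;>
    rcases le_total a x with h3 | h3 <;> rcases le_total a y with h4 | h4 <;>
    simp [min_eq_left, min_eq_right, max_eq_left, max_eq_right, *] <;> nlinarith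

/-- Nodal form of Lemma `LEM:generalize_Barranachea`:
for the coordinatewise truncation `P`, its complement `Q = id - P`, and the
positively-weighted bilinear form `s`, one has `s (Q r - Q v) (P r - P v) ≥ 0`. -/
theorem stmt_1 (n : ℕ) (a b σ : Fin n → ℝ)
    (hab : ∀ i, a i ≤ b i) (hσ : ∀ i, 0 < σ i)
    (P Q : (Fin n → ℝ) → (Fin n → ℝ))
    (hP : ∀ v i, P v i = max (a i) (min (v i) (b i)))
    (hQ : ∀ v, Q v = v - P v)
    (s : (Fin n → ℝ) → (Fin n → ℝ) → ℝ)
    (hs : ∀ w v, s w v = ∑ i, σ i * w i * v i)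
    (r v : Fin n → ℝ) :
    s (Q r - Q v) (P r - P v) ≥ 0 := by
  rw [hs]
  apply Finset.sum_nonneg
  intro i _
  have h := clamp_key (a i) (b i) (r i) (v i) (hab i)
  simp only [Pi.sub_apply, hQ, hP]
  have := (hσ i).le
  nlinarith
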